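/- Let n1, n2 be positive integers, let γ > 0 and ε > 0, and let c ∈ ℝ^{n1×n2}. Let μ = (μ1, μ2) ∈ ℝ^{n1} × ℝ^{n2} be a point with Ω_0(μ) ≠ ∅ (so that S_{γ,ε} is not differentiable at μ). Then a linear map G : ℝ^{n1} × ℝ^{n2} → ℝ^{n1×n2} is a Bouligand subgradient of S_{γ,ε} at μ — meaning that there exists a sequence (μ_k)_{k∈ℕ} with μ_k → μ, S_{γ,ε} Fréchet differentiable at every μ_k, and the Fréchet derivatives of S_{γ,ε} at μ_k converging to G — if and only if there exists an index set A ⊆ Ω_0(μ) having an outer structure w.r.t. Ω_0(μ) such that G is the map h ↦ M(Ω_+(μ) ∪ A)(η1 ⊕ η2) with (η1, η2) := (N(Ω_+(μ) ∪ A) + γ ε I)^{-1} h. -/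

import Mathlib

open Filter Topology

noncomputable section

/-- The regularized dual system (for parameters γ, ε and cost c) associated with data
(μ1, μ2), in the unknowns (α1, α2). -/
def DualSys {n1 n2 : ℕ} (γ ε : ℝ) (c : Fin n1 → Fin n2 → ℝ)
    (μ1 : Fin n1 → ℝ) (μ2 : Fin n2 → ℝ) (α1 : Fin n1 → ℝ) (α2 : Fin n2 → ℝ) : Prop :=
  (∀ i, (∑ j, max (α1 i + α2 j - c i j) 0) + γ * ε * α1 i = γ * μ1 i) ∧
  (∀ j, (∑ i, max (α1 i + α2 j - c i j) 0) + γ * ε * α2 j = γ * μ2 j)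

/-- The regularized marginal-to-transport-plan mapping S_{γ,ε} associated with a solution
operator F of the regularized dual system. -/
def Smap {n1 n2 : ℕ} (γ : ℝ) (c : Fin n1 → Fin n2 → ℝ)
    (F : (Fin n1 → ℝ) × (Fin n2 → ℝ) → (Fin n1 → ℝ) × (Fin n2 → ℝ))
    (μ : (Fin n1 → ℝ) × (Fin n2 → ℝ)) : Fin n1 → Fin n2 → ℝ :=
  fun i j => (1 / γ) * max ((F μ).1 i + (F μ).2 j - c i j) 0

/-- The set Ω_+(μ) of strictly positive indices. -/
def omegaPlus {n1 n2 : ℕ} (c : Fin n1 → Fin n2 → ℝ)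
    (F : (Fin n1 → ℝ) × (Fin n2 → ℝ) → (Fin n1 → ℝ) × (Fin n2 → ℝ))
    (μ : (Fin n1 → ℝ) × (Fin n2 → ℝ)) : Set (Fin n1 × Fin n2) :=
  {p | 0 < (F μ).1 p.1 + (F μ).2 p.2 - c p.1 p.2}

/-- The set Ω_0(μ) of vanishing indices. -/
def omegaZero {n1 n2 : ℕ} (c : Fin n1 → Fin n2 → ℝ)
    (F : (Fin n1 → ℝ) × (Fin n2 → ℝ) → (Fin n1 → ℝ) × (Fin n2 → ℝ))
    (μ : (Fin n1 → ℝ) × (Fin n2 → ℝ)) : Set (Fin n1 × Fin n2) :=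
  {p | (F μ).1 p.1 + (F μ).2 p.2 - c p.1 p.2 = 0}

/-- The characteristic matrix χ(A) of an index set A. -/
def chiMat {n1 n2 : ℕ} (A : Set (Fin n1 × Fin n2)) : Fin n1 → Fin n2 → ℝ :=
  fun i j => Set.indicator A (fun _ => (1 : ℝ)) (i, j)

/-- The system matrix N(A) ∈ ℝ^{(n1+n2)×(n1+n2)} associated with an index set A,
indexed by `Fin n1 ⊕ Fin n2`. -/
def sysMat {n1 n2 : ℕ} (A : Set (Fin n1 × Fin n2)) :
    Matrix (Fin n1 ⊕ Fin n2) (Fin n1 ⊕ Fin n2) ℝ :=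
  Matrix.of fun p q =>
    match p, q with
    | Sum.inl i, Sum.inl i' => if i = i' then ∑ j, chiMat A i j else 0
    | Sum.inl i, Sum.inr j => chiMat A i j
    | Sum.inr j, Sum.inl i => chiMat A i j
    | Sum.inr j, Sum.inr j' => if j = j' then ∑ i, chiMat A i j else 0

/-- A ⊆ B has an outer structure w.r.t. B. -/
def HasOuterStructure {n1 n2 : ℕ} (A B : Set (Fin n1 × Fin n2)) : Prop :=
  ∃ (v1 : Fin n1 → ℝ) (v2 : Fin n2 → ℝ),
    (∀ p ∈ A, 0 < v1 p.1 + v2 p.2) ∧ (∀ p ∈ B \ A, v1 p.1 + v2 p.2 < 0)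

namespace BPf

variable {n1 n2 : ℕ} {γ ε : ℝ} {c : Fin n1 → Fin n2 → ℝ}

lemma max_sub_max_mul_nonneg (a b : ℝ) : 0 ≤ (max a 0 - max b 0) * (a - b) := by
  rcases le_total a b with h | h
  · have h1 : max a 0 ≤ max b 0 := max_le_max h le_rfl
    nlinarith
  · have h1 : max b 0 ≤ max a 0 := max_le_max h le_rfl
    nlinarith

lemma dual_unique (hγ : 0 < γ) (hε : 0 < ε) {μ1 : Fin n1 → ℝ} {μ2 : Fin n2 → ℝ}
    {α1 β1 : Fin n1 → ℝ} {α2 β2 : Fin n2 → ℝ}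
    (hα : DualSys γ ε c μ1 μ2 α1 α2) (hβ : DualSys γ ε c μ1 μ2 β1 β2) :
    α1 = β1 ∧ α2 = β2 := by
  set Δ : Fin n1 → Fin n2 → ℝ :=
    fun i j => max (α1 i + α2 j - c i j) 0 - max (β1 i + β2 j - c i j) 0 with hΔ
  have E1 : ∀ i, ∑ j, Δ i j = -(γ * ε) * (α1 i - β1 i) := by
    intro i
    have h1 := hα.1 i
    have h2 := hβ.1 i
    simp only [hΔ]
    rw [Finset.sum_sub_distrib]
    linarith
  have E2 : ∀ j, ∑ i, Δ i j = -(γ * ε) * (α2 j - β2 j) := by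
    intro j
    have h1 := hα.2 j
    have h2 := hβ.2 j
    simp only [hΔ]
    rw [Finset.sum_sub_distrib]
    linarith
  have key : 0 ≤ ∑ i, ∑ j, Δ i j * ((α1 i - β1 i) + (α2 j - β2 j)) := by
    refine Finset.sum_nonneg fun i _ => Finset.sum_nonneg fun j _ => ?_
    have h0 := max_sub_max_mul_nonneg (α1 i + α2 j - c i j) (β1 i + β2 j - c i j)
    have heq : (α1 i + α2 j - c i j) - (β1 i + β2 j - c i j)
        = (α1 i - β1 i) + (α2 j - β2 j) := by ring
    rw [heq] at h0
    exact h0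
  have expand : ∑ i, ∑ j, Δ i j * ((α1 i - β1 i) + (α2 j - β2 j))
      = -(γ * ε) * ((∑ i, (α1 i - β1 i) ^ 2) + (∑ j, (α2 j - β2 j) ^ 2)) := by
    have hsplit : ∀ i : Fin n1, ∀ j : Fin n2, Δ i j * ((α1 i - β1 i) + (α2 j - β2 j))
        = Δ i j * (α1 i - β1 i) + Δ i j * (α2 j - β2 j) := fun i j => by ring
    simp_rw [hsplit, Finset.sum_add_distrib]
    have hswap : ∑ i, ∑ j, Δ i j * (α2 j - β2 j) = ∑ j, ∑ i, Δ i j * (α2 j - β2 j) :=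
      Finset.sum_comm
    rw [hswap]
    simp_rw [← Finset.sum_mul, E1, E2]
    rw [mul_add, Finset.mul_sum, Finset.mul_sum]
    congr 1 <;> exact Finset.sum_congr rfl fun _ _ => by ring
  rw [expand] at key
  have hS1 : 0 ≤ ∑ i, (α1 i - β1 i) ^ 2 := Finset.sum_nonneg fun i _ => sq_nonneg _
  have hS2 : 0 ≤ ∑ j, (α2 j - β2 j) ^ 2 := Finset.sum_nonneg fun j _ => sq_nonneg _
  have hγε : 0 < γ * ε := mul_pos hγ hε
  have hsum : (∑ i, (α1 i - β1 i) ^ 2) + (∑ j, (α2 j - β2 j) ^ 2) ≤ 0 := by nlinarith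
  have h1 : ∑ i, (α1 i - β1 i) ^ 2 = 0 := le_antisymm (by linarith) hS1
  have h2 : ∑ j, (α2 j - β2 j) ^ 2 = 0 := le_antisymm (by linarith) hS2
  constructor
  · funext i
    have := (Finset.sum_eq_zero_iff_of_nonneg (fun i _ => sq_nonneg (α1 i - β1 i))).1 h1
      i (Finset.mem_univ i)
    have := pow_eq_zero_iff (n := 2) (by norm_num) |>.1 this
    linarith [sub_eq_zero.1 this]
  · funext j
    have := (Finset.sum_eq_zero_iff_of_nonneg (fun j _ => sq_nonneg (α2 j - β2 j))).1 h2
      j (Finset.mem_univ j)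
    have := pow_eq_zero_iff (n := 2) (by norm_num) |>.1 this
    linarith [sub_eq_zero.1 this]


section numap

variable (γ ε c) in
/-- The forward map: given dual variables β, produce the data μ for which β solves the
dual system. -/
def numap (β : (Fin n1 → ℝ) × (Fin n2 → ℝ)) : (Fin n1 → ℝ) × (Fin n2 → ℝ) :=
  (fun i => ((∑ j, max (β.1 i + β.2 j - c i j) 0) + γ * ε * β.1 i) / γ,
   fun j => ((∑ i, max (β.1 i + β.2 j - c i j) 0) + γ * ε * β.2 j) / γ)

lemma dualSys_numap (hγ : 0 < γ) (β : (Fin n1 → ℝ) × (Fin n2 → ℝ)) :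
    DualSys γ ε c (numap γ ε c β).1 (numap γ ε c β).2 β.1 β.2 := by
  constructor <;> intro x <;> simp only [numap] <;>
    rw [mul_div_cancel₀ _ (ne_of_gt hγ)]

variable {F : (Fin n1 → ℝ) × (Fin n2 → ℝ) → (Fin n1 → ℝ) × (Fin n2 → ℝ)}

lemma F_numap (hγ : 0 < γ) (hε : 0 < ε)
    (hF : ∀ μ : (Fin n1 → ℝ) × (Fin n2 → ℝ), DualSys γ ε c μ.1 μ.2 (F μ).1 (F μ).2)
    (β : (Fin n1 → ℝ) × (Fin n2 → ℝ)) : F (numap γ ε c β) = β := by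
  have h := dual_unique hγ hε (hF (numap γ ε c β)) (dualSys_numap hγ β)
  exact Prod.ext h.1 h.2

lemma numap_F (hγ : 0 < γ)
    (hF : ∀ μ : (Fin n1 → ℝ) × (Fin n2 → ℝ), DualSys γ ε c μ.1 μ.2 (F μ).1 (F μ).2)
    (μ : (Fin n1 → ℝ) × (Fin n2 → ℝ)) : numap γ ε c (F μ) = μ := by
  have h1 := (hF μ).1
  have h2 := (hF μ).2
  refine Prod.ext (funext fun i => ?_) (funext fun j => ?_) <;> simp only [numap]
  · rw [h1 i, mul_div_cancel_left₀ _ (ne_of_gt hγ)]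
  · rw [h2 j, mul_div_cancel_left₀ _ (ne_of_gt hγ)]

lemma continuous_numap : Continuous (numap γ ε c (n1 := n1) (n2 := n2)) := by
  refine continuous_prodMk.2 ⟨?_, ?_⟩ <;> refine continuous_pi fun x => Continuous.div_const ?_ γ
  · exact ((continuous_finset_sum _ fun j _ =>
      (((continuous_apply x).comp continuous_fst).add
        ((continuous_apply j).comp continuous_snd)).sub continuous_const |>.max
        continuous_const)).add
      (continuous_const.mul ((continuous_apply x).comp continuous_fst))
  · exact ((continuous_finset_sum _ fun i _ =>
      (((continuous_apply i).comp continuous_fst).add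
        ((continuous_apply x).comp continuous_snd)).sub continuous_const |>.max
        continuous_const)).add
      (continuous_const.mul ((continuous_apply x).comp continuous_snd))

end numap

section chi

lemma chiMat_mem {A : Set (Fin n1 × Fin n2)} {i j} (h : (i, j) ∈ A) : chiMat A i j = 1 :=
  Set.indicator_of_mem h _

lemma chiMat_not_mem {A : Set (Fin n1 × Fin n2)} {i j} (h : (i, j) ∉ A) : chiMat A i j = 0 :=
  Set.indicator_of_notMem h _

lemma chiMat_nonneg (A : Set (Fin n1 × Fin n2)) (i j) : 0 ≤ chiMat A i j := by
  by_cases h : (i, j) ∈ A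
  · rw [chiMat_mem h]; norm_num
  · rw [chiMat_not_mem h]

end chi


section mat

variable (γ ε) in
def Mmat (A : Set (Fin n1 × Fin n2)) : Matrix (Fin n1 ⊕ Fin n2) (Fin n1 ⊕ Fin n2) ℝ :=
  sysMat A + (γ * ε) • (1 : Matrix (Fin n1 ⊕ Fin n2) (Fin n1 ⊕ Fin n2) ℝ)

lemma Mmat_mulVec_inl (A : Set (Fin n1 × Fin n2)) (x : Fin n1 ⊕ Fin n2 → ℝ) (i : Fin n1) :
    (Mmat γ ε A).mulVec x (Sum.inl i)
      = (∑ j, chiMat A i j * (x (Sum.inl i) + x (Sum.inr j))) + γ * ε * x (Sum.inl i) := by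
  simp only [Mmat, Matrix.mulVec, dotProduct, Fintype.sum_sum_type, Matrix.add_apply,
    Matrix.smul_apply, Matrix.one_apply, sysMat, Matrix.of_apply, smul_eq_mul]
  simp only [Sum.inl.injEq, reduceCtorEq, if_false, mul_ite, mul_zero, mul_one,
    add_mul, ite_mul, zero_mul, Finset.sum_add_distrib, Finset.sum_ite_eq, Finset.mem_univ,
    if_true, add_zero, zero_add]
  simp_rw [mul_add, Finset.sum_add_distrib, Finset.sum_mul]
  ring

lemma Mmat_mulVec_inr (A : Set (Fin n1 × Fin n2)) (x : Fin n1 ⊕ Fin n2 → ℝ) (j : Fin n2) :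
    (Mmat γ ε A).mulVec x (Sum.inr j)
      = (∑ i, chiMat A i j * (x (Sum.inl i) + x (Sum.inr j))) + γ * ε * x (Sum.inr j) := by
  simp only [Mmat, Matrix.mulVec, dotProduct, Fintype.sum_sum_type, Matrix.add_apply,
    Matrix.smul_apply, Matrix.one_apply, sysMat, Matrix.of_apply, smul_eq_mul]
  simp only [Sum.inr.injEq, reduceCtorEq, if_false, mul_ite, mul_zero, mul_one,
    add_mul, ite_mul, zero_mul, Finset.sum_add_distrib, Finset.sum_ite_eq, Finset.mem_univ,
    if_true, add_zero, zero_add]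
  simp_rw [mul_add, Finset.sum_add_distrib, Finset.sum_mul]
  ring


lemma Mmat_quad (A : Set (Fin n1 × Fin n2)) (x : Fin n1 ⊕ Fin n2 → ℝ) :
    dotProduct x ((Mmat γ ε A).mulVec x)
      = (∑ i, ∑ j, chiMat A i j * (x (Sum.inl i) + x (Sum.inr j)) ^ 2)
        + γ * ε * ((∑ i, x (Sum.inl i) ^ 2) + (∑ j, x (Sum.inr j) ^ 2)) := by
  rw [dotProduct, Fintype.sum_sum_type]
  simp_rw [Mmat_mulVec_inl, Mmat_mulVec_inr, mul_add, Finset.mul_sum, Finset.sum_add_distrib]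
  have hswap : ∑ j : Fin n2, ∑ i : Fin n1,
        x (Sum.inr j) * (chiMat A i j * x (Sum.inl i) + chiMat A i j * x (Sum.inr j))
      = ∑ i : Fin n1, ∑ j : Fin n2,
        x (Sum.inr j) * (chiMat A i j * x (Sum.inl i) + chiMat A i j * x (Sum.inr j)) :=
    Finset.sum_comm
  rw [hswap]
  have hT : (∑ i : Fin n1, ∑ j : Fin n2,
        x (Sum.inl i) * (chiMat A i j * x (Sum.inl i) + chiMat A i j * x (Sum.inr j)))
      + (∑ i : Fin n1, ∑ j : Fin n2,
        x (Sum.inr j) * (chiMat A i j * x (Sum.inl i) + chiMat A i j * x (Sum.inr j)))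
      = ∑ i, ∑ j, chiMat A i j * (x (Sum.inl i) + x (Sum.inr j)) ^ 2 := by
    rw [← Finset.sum_add_distrib]
    refine Finset.sum_congr rfl fun i _ => ?_
    rw [← Finset.sum_add_distrib]
    exact Finset.sum_congr rfl fun j _ => by ring
  have hB1 : ∑ i : Fin n1, x (Sum.inl i) * (γ * ε * x (Sum.inl i))
      = ∑ i : Fin n1, γ * ε * x (Sum.inl i) ^ 2 :=
    Finset.sum_congr rfl fun i _ => by ring
  have hB2 : ∑ j : Fin n2, x (Sum.inr j) * (γ * ε * x (Sum.inr j))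
      = ∑ j : Fin n2, γ * ε * x (Sum.inr j) ^ 2 :=
    Finset.sum_congr rfl fun j _ => by ring
  linarith [hT, hB1, hB2]

lemma Mmat_posDef (hγ : 0 < γ) (hε : 0 < ε) (A : Set (Fin n1 × Fin n2)) :
    (Mmat γ ε A).PosDef := by
  rw [Matrix.posDef_iff_dotProduct_mulVec]
  constructor
  · show (Mmat γ ε A).conjTranspose = Mmat γ ε A
    ext p q
    simp only [Matrix.conjTranspose_apply, star_trivial]
    rcases p with i | j <;> rcases q with i' | j' <;>
      simp only [Mmat, Matrix.add_apply, Matrix.smul_apply, Matrix.one_apply, sysMat,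
        Matrix.of_apply, smul_eq_mul]
    · rcases eq_or_ne i i' with h | h
      · subst h; rfl
      · simp [h, Ne.symm h]
    · simp
    · simp
    · rcases eq_or_ne j j' with h | h
      · subst h; rfl
      · simp [h, Ne.symm h]
  · intro x hx
    have hsx : star x = x := by funext q; simp
    rw [hsx, Mmat_quad]
    have h1 : 0 ≤ ∑ i, ∑ j, chiMat A i j * (x (Sum.inl i) + x (Sum.inr j)) ^ 2 :=
      Finset.sum_nonneg fun i _ => Finset.sum_nonneg fun j _ =>
        mul_nonneg (chiMat_nonneg A i j) (sq_nonneg _)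
    have h2 : 0 < (∑ i, x (Sum.inl i) ^ 2) + (∑ j, x (Sum.inr j) ^ 2) := by
      obtain ⟨q, hq⟩ := Function.ne_iff.1 hx
      have hq0 : x q ≠ 0 := by simpa using hq
      have hq' : 0 < x q ^ 2 := by positivity
      rcases q with i | j
      · have : 0 < ∑ i', x (Sum.inl i') ^ 2 :=
          Finset.sum_pos' (fun _ _ => sq_nonneg _) ⟨i, Finset.mem_univ i, hq'⟩
        have : 0 ≤ ∑ j, x (Sum.inr j) ^ 2 := Finset.sum_nonneg fun _ _ => sq_nonneg _
        linarith
      · have h3 : 0 < ∑ j', x (Sum.inr j') ^ 2 :=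
          Finset.sum_pos' (fun _ _ => sq_nonneg _) ⟨j, Finset.mem_univ j, hq'⟩
        have : 0 ≤ ∑ i, x (Sum.inl i) ^ 2 := Finset.sum_nonneg fun _ _ => sq_nonneg _
        linarith
    have := mul_pos (mul_pos hγ hε) h2
    linarith

lemma Mmat_isUnit_det (hγ : 0 < γ) (hε : 0 < ε) (A : Set (Fin n1 × Fin n2)) :
    IsUnit (Mmat γ ε A).det :=
  isUnit_iff_ne_zero.2 (ne_of_gt (Mmat_posDef hγ hε A).det_pos)

lemma Mmat_mulVec_inv (hγ : 0 < γ) (hε : 0 < ε) (A : Set (Fin n1 × Fin n2))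
    (y : Fin n1 ⊕ Fin n2 → ℝ) :
    (Mmat γ ε A).mulVec ((Mmat γ ε A)⁻¹.mulVec y) = y := by
  rw [Matrix.mulVec_mulVec, Matrix.mul_nonsing_inv _ (Mmat_isUnit_det hγ hε A),
    Matrix.one_mulVec]

end mat

section deriv

variable (γ ε) in
def Dfun (A : Set (Fin n1 × Fin n2)) (h : (Fin n1 → ℝ) × (Fin n2 → ℝ)) :
    Fin n1 → Fin n2 → ℝ :=
  fun i j => chiMat A i j *
    ((Mmat γ ε A)⁻¹.mulVec (Sum.elim h.1 h.2) (Sum.inl i)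
      + (Mmat γ ε A)⁻¹.mulVec (Sum.elim h.1 h.2) (Sum.inr j))

lemma sum_elim_add (h h' : (Fin n1 → ℝ) × (Fin n2 → ℝ)) :
    Sum.elim (h + h').1 (h + h').2 = Sum.elim h.1 h.2 + Sum.elim h'.1 h'.2 := by
  funext q; rcases q with i | j <;> rfl

lemma sum_elim_smul (a : ℝ) (h : (Fin n1 → ℝ) × (Fin n2 → ℝ)) :
    Sum.elim (a • h).1 (a • h).2 = a • Sum.elim h.1 h.2 := by
  funext q; rcases q with i | j <;> rfl

variable (γ ε) in
def Dlin (A : Set (Fin n1 × Fin n2)) :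
    ((Fin n1 → ℝ) × (Fin n2 → ℝ)) →ₗ[ℝ] (Fin n1 → Fin n2 → ℝ) where
  toFun := Dfun γ ε A
  map_add' h h' := by
    funext i j
    simp only [Dfun, sum_elim_add, Matrix.mulVec_add, Pi.add_apply]
    ring
  map_smul' a h := by
    funext i j
    simp only [Dfun, sum_elim_smul, Matrix.mulVec_smul, Pi.smul_apply, smul_eq_mul,
      RingHom.id_apply]
    ring

variable (γ ε) in
def Dclm (A : Set (Fin n1 × Fin n2)) :
    ((Fin n1 → ℝ) × (Fin n2 → ℝ)) →L[ℝ] (Fin n1 → Fin n2 → ℝ) :=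
  (Dlin γ ε A).toContinuousLinearMap

lemma Dclm_apply (A : Set (Fin n1 × Fin n2)) (h : (Fin n1 → ℝ) × (Fin n2 → ℝ)) :
    Dclm γ ε A h = Dfun γ ε A h := rfl

end deriv

section affine

variable {F : (Fin n1 → ℝ) × (Fin n2 → ℝ) → (Fin n1 → ℝ) × (Fin n2 → ℝ)}

lemma hasFDerivAt_Smap (hn1 : 0 < n1) (hn2 : 0 < n2) (hγ : 0 < γ) (hε : 0 < ε)
    (hF : ∀ μ : (Fin n1 → ℝ) × (Fin n2 → ℝ), DualSys γ ε c μ.1 μ.2 (F μ).1 (F μ).2)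
    (ν : (Fin n1 → ℝ) × (Fin n2 → ℝ)) (h0 : omegaZero c F ν = ∅) :
    HasFDerivAt (Smap γ c F) (Dclm γ ε (omegaPlus c F ν)) ν := by
  classical
  set α := F ν with hα
  set s : Fin n1 × Fin n2 → ℝ := fun p => α.1 p.1 + α.2 p.2 - c p.1 p.2 with hs
  set A' := omegaPlus c F ν with hA'
  have hgap : ∀ p : Fin n1 × Fin n2, s p ≠ 0 := by
    intro p hp
    exact Set.eq_empty_iff_forall_notMem.1 h0 p hp
  have hne : Nonempty (Fin n1 × Fin n2) := ⟨(⟨0, hn1⟩, ⟨0, hn2⟩)⟩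
  have hun : (Finset.univ : Finset (Fin n1 × Fin n2)).Nonempty := Finset.univ_nonempty
  set δ : ℝ := Finset.univ.inf' hun (fun p => |s p|) with hδdef
  have hδpos : 0 < δ := by
    rw [hδdef, Finset.lt_inf'_iff]
    exact fun p _ => abs_pos.2 (hgap p)
  have hδle : ∀ p : Fin n1 × Fin n2, δ ≤ |s p| := fun p =>
    Finset.inf'_le _ (Finset.mem_univ p)
  -- the linear correction term
  set dv : (Fin n1 → ℝ) × (Fin n2 → ℝ) → Fin n1 ⊕ Fin n2 → ℝ :=
    fun ρ => (Mmat γ ε A')⁻¹.mulVec (Sum.elim (ρ.1 - ν.1) (ρ.2 - ν.2)) with hdv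
  have hdvcont : ∀ q, Continuous (fun ρ => dv ρ q) := by
    intro q
    simp only [hdv, Matrix.mulVec, dotProduct]
    refine continuous_finset_sum _ fun q' _ => continuous_const.mul ?_
    rcases q' with i | j
    · exact ((continuous_apply i).comp continuous_fst).sub continuous_const
    · exact ((continuous_apply j).comp continuous_snd).sub continuous_const
  have hdvν : ∀ q, dv ν q = 0 := by
    intro q
    simp only [hdv]
    have : Sum.elim (ν.1 - ν.1) (ν.2 - ν.2) = (0 : Fin n1 ⊕ Fin n2 → ℝ) := by
      funext q'; rcases q' with i | j <;> simp
    rw [this, Matrix.mulVec_zero]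
    rfl
  have hev : ∀ᶠ ρ in 𝓝 ν, ∀ p : Fin n1 × Fin n2,
      |γ * (dv ρ (Sum.inl p.1) + dv ρ (Sum.inr p.2))| < δ := by
    rw [Filter.eventually_all]
    intro p
    have hc : Continuous (fun ρ => γ * (dv ρ (Sum.inl p.1) + dv ρ (Sum.inr p.2))) :=
      continuous_const.mul ((hdvcont _).add (hdvcont _))
    have h0' : Tendsto (fun ρ => γ * (dv ρ (Sum.inl p.1) + dv ρ (Sum.inr p.2))) (𝓝 ν)
        (𝓝 0) := by
      have := hc.continuousAt (x := ν)
      rwa [ContinuousAt, hdvν, hdvν, add_zero, mul_zero] at this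
    have := Metric.tendsto_nhds.1 h0' δ hδpos
    refine this.mono fun ρ hρ => ?_
    rwa [Real.dist_eq, sub_zero] at hρ
  -- on that neighborhood, S is affine
  have hmain : ∀ᶠ ρ in 𝓝 ν,
      Smap γ c F ρ = Smap γ c F ν + Dclm γ ε A' (ρ - ν) := by
    refine hev.mono fun ρ hρ => ?_
    set β : (Fin n1 → ℝ) × (Fin n2 → ℝ) :=
      (fun i => α.1 i + γ * dv ρ (Sum.inl i), fun j => α.2 j + γ * dv ρ (Sum.inr j)) with hβ
    have hsβ : ∀ i j, β.1 i + β.2 j - c i j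
        = s (i, j) + γ * (dv ρ (Sum.inl i) + dv ρ (Sum.inr j)) := by
      intro i j; simp only [hβ, hs]; ring
    have hsign : ∀ i j, ((i, j) ∈ A' → 0 < β.1 i + β.2 j - c i j) ∧
        ((i, j) ∉ A' → β.1 i + β.2 j - c i j < 0) := by
      intro i j
      have hb := hρ (i, j)
      have hb' : |γ * (dv ρ (Sum.inl i) + dv ρ (Sum.inr j))| < δ := hb
      constructor
      · intro hmem
        have hspos : 0 < s (i, j) := hmem
        have : δ ≤ s (i, j) := le_trans (hδle (i, j)) (le_of_eq (abs_of_pos hspos))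
        rw [hsβ]
        have := abs_lt.1 hb'
        linarith [this.1]
      · intro hmem
        have hsneg : s (i, j) < 0 := by
          rcases lt_trichotomy (s (i, j)) 0 with h | h | h
          · exact h
          · exact absurd h (hgap (i, j))
          · exact absurd h (fun h' => hmem h')
        have : δ ≤ -s (i, j) := le_trans (hδle (i, j)) (le_of_eq (abs_of_neg hsneg))
        rw [hsβ]
        have := abs_lt.1 hb'
        linarith [this.2]
    -- numap β = ρ
    have hnumap : numap γ ε c β = ρ := by
      have hMdv : ∀ q, (Mmat γ ε A').mulVec (dv ρ) q = Sum.elim (ρ.1 - ν.1) (ρ.2 - ν.2) q := by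
        intro q
        rw [hdv, Mmat_mulVec_inv hγ hε]
      refine Prod.ext (funext fun i => ?_) (funext fun j => ?_)
      · have hsum : ∑ j, max (β.1 i + β.2 j - c i j) 0
            = (∑ j, chiMat A' i j * s (i, j))
              + γ * ((∑ j, chiMat A' i j * (dv ρ (Sum.inl i) + dv ρ (Sum.inr j)))) := by
          rw [Finset.mul_sum, ← Finset.sum_add_distrib]
          refine Finset.sum_congr rfl fun j _ => ?_
          by_cases hmem : (i, j) ∈ A'
          · rw [max_eq_left (le_of_lt ((hsign i j).1 hmem)), hsβ, chiMat_mem hmem]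
            ring
          · rw [max_eq_right (le_of_lt ((hsign i j).2 hmem)), chiMat_not_mem hmem]
            ring
        have hsum2 : ∑ j, chiMat A' i j * s (i, j) = ∑ j, max (s (i, j)) 0 := by
          refine Finset.sum_congr rfl fun j _ => ?_
          by_cases hmem : (i, j) ∈ A'
          · rw [chiMat_mem hmem, max_eq_left (le_of_lt hmem), one_mul]
          · have hsneg : s (i, j) ≤ 0 := by
              rcases lt_trichotomy (s (i, j)) 0 with h | h | h
              · exact le_of_lt h
              · exact le_of_eq h
              · exact absurd h (fun h' => hmem h')
            rw [chiMat_not_mem hmem, max_eq_right hsneg, zero_mul]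
        have hFν := (hF ν).1 i
        have hMi := hMdv (Sum.inl i)
        rw [Mmat_mulVec_inl] at hMi
        simp only [numap, hβ]
        rw [hsum, hsum2]
        have : ∑ j, max (s (i, j)) 0 = γ * ν.1 i - γ * ε * α.1 i := by
          simp only [hs]
          linarith [hFν]
        rw [this]
        simp only [Sum.elim_inl, Pi.sub_apply] at hMi
        field_simp
        linear_combination hMi
      · have hsum : ∑ i, max (β.1 i + β.2 j - c i j) 0
            = (∑ i, chiMat A' i j * s (i, j))
              + γ * ((∑ i, chiMat A' i j * (dv ρ (Sum.inl i) + dv ρ (Sum.inr j)))) := by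
          rw [Finset.mul_sum, ← Finset.sum_add_distrib]
          refine Finset.sum_congr rfl fun i _ => ?_
          by_cases hmem : (i, j) ∈ A'
          · rw [max_eq_left (le_of_lt ((hsign i j).1 hmem)), hsβ, chiMat_mem hmem]
            ring
          · rw [max_eq_right (le_of_lt ((hsign i j).2 hmem)), chiMat_not_mem hmem]
            ring
        have hsum2 : ∑ i, chiMat A' i j * s (i, j) = ∑ i, max (s (i, j)) 0 := by
          refine Finset.sum_congr rfl fun i _ => ?_
          by_cases hmem : (i, j) ∈ A'
          · rw [chiMat_mem hmem, max_eq_left (le_of_lt hmem), one_mul]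
          · have hsneg : s (i, j) ≤ 0 := by
              rcases lt_trichotomy (s (i, j)) 0 with h | h | h
              · exact le_of_lt h
              · exact le_of_eq h
              · exact absurd h (fun h' => hmem h')
            rw [chiMat_not_mem hmem, max_eq_right hsneg, zero_mul]
        have hFν := (hF ν).2 j
        have hMj := hMdv (Sum.inr j)
        rw [Mmat_mulVec_inr] at hMj
        simp only [numap, hβ]
        rw [hsum, hsum2]
        have : ∑ i, max (s (i, j)) 0 = γ * ν.2 j - γ * ε * α.2 j := by
          simp only [hs]
          linarith [hFν]
        rw [this]
        simp only [Sum.elim_inr, Pi.sub_apply] at hMj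
        field_simp
        linear_combination hMj
    have hFρ : F ρ = β := by
      rw [← hnumap]
      exact F_numap hγ hε hF β
    -- conclude pointwise equality
    funext i j
    simp only [Smap, hFρ, Pi.add_apply, Dclm_apply, Dfun]
    have hdsub : Sum.elim (ρ - ν).1 (ρ - ν).2 = Sum.elim (ρ.1 - ν.1) (ρ.2 - ν.2) := rfl
    rw [hdsub]
    by_cases hmem : (i, j) ∈ A'
    · rw [max_eq_left (le_of_lt ((hsign i j).1 hmem)), chiMat_mem hmem]
      have hmax : max ((F ν).1 i + (F ν).2 j - c i j) 0 = s (i, j) := by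
        rw [← hα, max_eq_left (le_of_lt hmem)]
      rw [hmax, hsβ]
      have hγne : γ ≠ 0 := ne_of_gt hγ
      field_simp [hdv]
      ring
    · rw [max_eq_right (le_of_lt ((hsign i j).2 hmem)), chiMat_not_mem hmem]
      have hsneg : s (i, j) ≤ 0 := by
        rcases lt_trichotomy (s (i, j)) 0 with h | h | h
        · exact le_of_lt h
        · exact le_of_eq h
        · exact absurd h (fun h' => hmem h')
      have hmax : max ((F ν).1 i + (F ν).2 j - c i j) 0 = 0 := by
        rw [← hα]
        exact max_eq_right hsneg
      rw [hmax]
      ring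
  -- the model map is differentiable
  have hmodel : HasFDerivAt (fun ρ => Smap γ c F ν + Dclm γ ε A' (ρ - ν))
      (Dclm γ ε A') ν := by
    have heq : (fun ρ : (Fin n1 → ℝ) × (Fin n2 → ℝ) =>
        Smap γ c F ν + Dclm γ ε A' (ρ - ν))
        = fun ρ => (Smap γ c F ν - Dclm γ ε A' ν) + Dclm γ ε A' ρ := by
      funext ρ
      rw [map_sub]
      abel
    rw [heq]
    exact (Dclm γ ε A').hasFDerivAt.const_add _
  exact hmodel.congr_of_eventuallyEq (hmain.mono fun ρ hρ => hρ)

end affine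

section backward

variable {F : (Fin n1 → ℝ) × (Fin n2 → ℝ) → (Fin n1 → ℝ) × (Fin n2 → ℝ)}

lemma exists_delta (hn1 : 0 < n1) (hn2 : 0 < n2) (s w : Fin n1 × Fin n2 → ℝ) :
    ∃ δ : ℝ, 0 < δ ∧ ∀ t : ℝ, 0 < t → t < δ → ∀ p : Fin n1 × Fin n2,
      (0 < s p → 0 < s p + t * w p) ∧ (s p < 0 → s p + t * w p < 0) := by
  have hne : Nonempty (Fin n1 × Fin n2) := ⟨(⟨0, hn1⟩, ⟨0, hn2⟩)⟩
  have hun : (Finset.univ : Finset (Fin n1 × Fin n2)).Nonempty := Finset.univ_nonempty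
  set K : ℝ := Finset.univ.sup' hun (fun p => |w p|) + 1 with hK
  have hKpos : 0 < K := by
    have h1 : |w (Classical.arbitrary (Fin n1 × Fin n2))|
        ≤ Finset.univ.sup' hun (fun p => |w p|) :=
      Finset.le_sup' (fun p => |w p|) (Finset.mem_univ (Classical.arbitrary (Fin n1 × Fin n2)))
    have h2 : (0:ℝ) ≤ |w (Classical.arbitrary (Fin n1 × Fin n2))| := abs_nonneg _
    linarith
  have hKw : ∀ p, |w p| < K := by
    intro p
    have := Finset.le_sup' (fun p => |w p|) (Finset.mem_univ p)
    simp only [hK]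
    linarith
  set δ0 : ℝ := Finset.univ.inf' hun (fun p => if s p = 0 then 1 else |s p|) with hδ0
  have hδ0pos : 0 < δ0 := by
    rw [hδ0, Finset.lt_inf'_iff]
    intro p _
    by_cases h : s p = 0
    · rw [if_pos h]; norm_num
    · rw [if_neg h]; exact abs_pos.2 h
  have hδ0le : ∀ p, s p ≠ 0 → δ0 ≤ |s p| := by
    intro p hp
    have := Finset.inf'_le (fun p => if s p = 0 then 1 else |s p|) (Finset.mem_univ p)
    rwa [if_neg hp] at this
  refine ⟨δ0 / K, div_pos hδ0pos hKpos, fun t ht htδ p => ?_⟩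
  have hb : |t * w p| < δ0 := by
    rw [abs_mul, abs_of_pos ht]
    calc t * |w p| ≤ t * K := by nlinarith [hKw p, abs_nonneg (w p)]
      _ < δ0 := by
        rw [lt_div_iff₀ hKpos] at htδ
        linarith
  constructor
  · intro hsp
    have h1 : δ0 ≤ s p := le_trans (hδ0le p (ne_of_gt hsp)) (le_of_eq (abs_of_pos hsp))
    have := abs_lt.1 hb
    linarith
  · intro hsp
    have h1 : δ0 ≤ -s p := le_trans (hδ0le p (ne_of_lt hsp)) (le_of_eq (abs_of_neg hsp))
    have := abs_lt.1 hb
    linarith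

lemma backward_dir (hn1 : 0 < n1) (hn2 : 0 < n2) (hγ : 0 < γ) (hε : 0 < ε)
    (hF : ∀ μ : (Fin n1 → ℝ) × (Fin n2 → ℝ), DualSys γ ε c μ.1 μ.2 (F μ).1 (F μ).2)
    (μ : (Fin n1 → ℝ) × (Fin n2 → ℝ)) (A : Set (Fin n1 × Fin n2))
    (hAsub : A ⊆ omegaZero c F μ)
    (hout : HasOuterStructure A (omegaZero c F μ)) :
    ∃ μs : ℕ → (Fin n1 → ℝ) × (Fin n2 → ℝ),
      Tendsto μs atTop (𝓝 μ) ∧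
      (∀ k, DifferentiableAt ℝ (Smap γ c F) (μs k)) ∧
      (∀ k, fderiv ℝ (Smap γ c F) (μs k) = Dclm γ ε (omegaPlus c F μ ∪ A)) := by
  classical
  obtain ⟨v1, v2, hpos, hneg⟩ := hout
  set α := F μ with hα
  set s : Fin n1 × Fin n2 → ℝ := fun p => α.1 p.1 + α.2 p.2 - c p.1 p.2 with hs
  set w : Fin n1 × Fin n2 → ℝ := fun p => v1 p.1 + v2 p.2 with hw
  obtain ⟨δ, hδpos, hδ⟩ := exists_delta hn1 hn2 s w
  set t : ℕ → ℝ := fun k => δ / (k + 2) with ht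
  have htpos : ∀ k, 0 < t k := fun k => div_pos hδpos (by positivity)
  have htlt : ∀ k, t k < δ := by
    intro k
    rw [ht]
    rw [div_lt_iff₀ (by positivity)]
    nlinarith [(Nat.cast_nonneg k : (0:ℝ) ≤ k)]
  set β : ℕ → (Fin n1 → ℝ) × (Fin n2 → ℝ) :=
    fun k => (fun i => α.1 i + t k * v1 i, fun j => α.2 j + t k * v2 j) with hβ
  set μs : ℕ → (Fin n1 → ℝ) × (Fin n2 → ℝ) := fun k => numap γ ε c (β k) with hμs
  have hFβ : ∀ k, F (μs k) = β k := fun k => F_numap hγ hε hF (β k)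
  have hsβ : ∀ k (p : Fin n1 × Fin n2),
      (β k).1 p.1 + (β k).2 p.2 - c p.1 p.2 = s p + t k * w p := by
    intro k p; simp only [hβ, hs, hw]; ring
  have hsign : ∀ k (p : Fin n1 × Fin n2),
      (p ∈ omegaPlus c F μ ∪ A → 0 < s p + t k * w p) ∧
      (p ∉ omegaPlus c F μ ∪ A → s p + t k * w p < 0) := by
    intro k p
    constructor
    · rintro (hp | hp)
      · exact (hδ (t k) (htpos k) (htlt k) p).1 hp
      · have hz : s p = 0 := hAsub hp
        have := hpos p hp
        rw [hz, zero_add]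
        exact mul_pos (htpos k) (by simpa [hw] using this)
    · intro hp
      have hp1 : p ∉ omegaPlus c F μ := fun h => hp (Or.inl h)
      have hp2 : p ∉ A := fun h => hp (Or.inr h)
      rcases lt_trichotomy (s p) 0 with h | h | h
      · exact (hδ (t k) (htpos k) (htlt k) p).2 h
      · have hmem : p ∈ omegaZero c F μ := by
          simp only [omegaZero, Set.mem_setOf_eq, ← hα]
          exact h
        have := hneg p ⟨hmem, hp2⟩
        rw [h, zero_add]
        exact mul_neg_of_pos_of_neg (htpos k) (by simpa [hw] using this)
      · exact absurd h (fun h' => hp1 h')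
  have homega0 : ∀ k, omegaZero c F (μs k) = ∅ := by
    intro k
    rw [Set.eq_empty_iff_forall_notMem]
    intro p hp
    have : (F (μs k)).1 p.1 + (F (μs k)).2 p.2 - c p.1 p.2 = 0 := hp
    rw [hFβ k, hsβ k p] at this
    rcases Classical.em (p ∈ omegaPlus c F μ ∪ A) with h | h
    · exact absurd this (ne_of_gt ((hsign k p).1 h))
    · exact absurd this (ne_of_lt ((hsign k p).2 h))
  have homegaP : ∀ k, omegaPlus c F (μs k) = omegaPlus c F μ ∪ A := by
    intro k
    ext p
    simp only [omegaPlus, Set.mem_setOf_eq, hFβ k, hsβ k p]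
    constructor
    · intro hlt
      by_contra h
      exact absurd hlt (not_lt.2 (le_of_lt ((hsign k p).2 h)))
    · exact (hsign k p).1
  have hderiv : ∀ k, HasFDerivAt (Smap γ c F) (Dclm γ ε (omegaPlus c F μ ∪ A)) (μs k) := by
    intro k
    have := hasFDerivAt_Smap hn1 hn2 hγ hε hF (μs k) (homega0 k)
    rwa [homegaP k] at this
  refine ⟨μs, ?_, fun k => (hderiv k).differentiableAt, fun k => (hderiv k).fderiv⟩
  -- convergence
  have htz : Tendsto t atTop (𝓝 0) := by
    rw [ht]
    have h1 : Tendsto (fun k : ℕ => ((k : ℝ) + 2)) atTop atTop :=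
      tendsto_atTop_add_const_right _ 2 tendsto_natCast_atTop_atTop
    have h2 : Tendsto (fun k : ℕ => ((k : ℝ) + 2)⁻¹) atTop (𝓝 0) :=
      tendsto_inv_atTop_zero.comp h1
    have := h2.const_mul δ
    simpa [div_eq_mul_inv, mul_zero] using this
  have hβtend : Tendsto β atTop (𝓝 α) := by
    rw [hβ]
    have h1 : Tendsto (fun k => (fun i => α.1 i + t k * v1 i)) atTop (𝓝 α.1) := by
      rw [tendsto_pi_nhds]
      intro i
      have : Tendsto (fun k => t k * v1 i) atTop (𝓝 0) := by
        simpa using htz.mul_const (v1 i)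
      simpa using tendsto_const_nhds.add this
    have h2 : Tendsto (fun k => (fun j => α.2 j + t k * v2 j)) atTop (𝓝 α.2) := by
      rw [tendsto_pi_nhds]
      intro j
      have : Tendsto (fun k => t k * v2 j) atTop (𝓝 0) := by
        simpa using htz.mul_const (v2 j)
      simpa using tendsto_const_nhds.add this
    exact h1.prodMk_nhds h2
  have := (continuous_numap (γ := γ) (ε := ε) (c := c)).continuousAt (x := α)
  have hcomp := this.tendsto.comp hβtend
  rwa [numap_F hγ hF μ] at hcomp

end backward

section forwardtools

variable {F : (Fin n1 → ℝ) × (Fin n2 → ℝ) → (Fin n1 → ℝ) × (Fin n2 → ℝ)}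

lemma deriv_along {f : (Fin n1 → ℝ) × (Fin n2 → ℝ) → Fin n1 → Fin n2 → ℝ}
    {G : ((Fin n1 → ℝ) × (Fin n2 → ℝ)) →L[ℝ] (Fin n1 → Fin n2 → ℝ)}
    {ν w : (Fin n1 → ℝ) × (Fin n2 → ℝ)} (hd : HasFDerivAt f G ν)
    (i : Fin n1) (j : Fin n2) (b δ : ℝ) (hδ : 0 < δ)
    (hcurve : ∀ t : ℝ, 0 ≤ t → t < δ → f (ν + t • w) i j = f ν i j + t * b) :
    G w i j = b := by
  have hline : HasDerivAt (fun t : ℝ => ν + t • w) w 0 := by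
    simpa using ((hasDerivAt_id (0 : ℝ)).smul_const w).const_add ν
  have hd' : HasFDerivAt f G ((fun t : ℝ => ν + t • w) 0) := by simpa using hd
  have hcomp : HasDerivAt (fun t : ℝ => f (ν + t • w)) (G w) 0 :=
    hd'.comp_hasDerivAt 0 hline
  have h1 : HasDerivAt (fun t : ℝ => f (ν + t • w) i) (G w i) 0 := hasDerivAt_pi.1 hcomp i
  have h2 : HasDerivAt (fun t : ℝ => f (ν + t • w) i j) (G w i j) 0 := hasDerivAt_pi.1 h1 j
  have h3 : HasDerivWithinAt (fun t : ℝ => f ν i j + t * b) b (Set.Ici (0:ℝ)) 0 := by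
    simpa using (((hasDerivAt_id (0:ℝ)).mul_const b).const_add
      (f ν i j)).hasDerivWithinAt (s := Set.Ici (0:ℝ))
  have hev : (fun t : ℝ => f (ν + t • w) i j) =ᶠ[𝓝[Set.Ici (0:ℝ)] 0]
      (fun t : ℝ => f ν i j + t * b) := by
    have hmem : Set.Ico (0:ℝ) δ ∈ 𝓝[Set.Ici (0:ℝ)] 0 :=
      Ico_mem_nhdsGE hδ
    exact Filter.eventually_iff_exists_mem.2 ⟨_, hmem, fun t ht => hcurve t ht.1 ht.2⟩
  have h4 : HasDerivWithinAt (fun t : ℝ => f (ν + t • w) i j) b (Set.Ici (0:ℝ)) 0 := by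
    refine h3.congr_of_eventuallyEq hev ?_
    have := hcurve 0 le_rfl hδ
    simpa using this
  have hu : UniqueDiffWithinAt ℝ (Set.Ici (0:ℝ)) 0 := uniqueDiffOn_Ici 0 0 Set.self_mem_Ici
  have e1 := (h2.hasDerivWithinAt (s := Set.Ici (0:ℝ))).derivWithin hu
  have e2 := h4.derivWithin hu
  rw [← e1, e2]

variable (γ ε) in
def wProd (B : Set (Fin n1 × Fin n2)) (v1 : Fin n1 → ℝ) (v2 : Fin n2 → ℝ) :
    (Fin n1 → ℝ) × (Fin n2 → ℝ) :=
  (fun i => (1/γ) * (Mmat γ ε B).mulVec (Sum.elim v1 v2) (Sum.inl i),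
   fun j => (1/γ) * (Mmat γ ε B).mulVec (Sum.elim v1 v2) (Sum.inr j))

lemma sum_elim_add' (a1 b1 : Fin n1 → ℝ) (a2 b2 : Fin n2 → ℝ) :
    Sum.elim (fun i => a1 i + b1 i) (fun j => a2 j + b2 j)
      = Sum.elim a1 a2 + Sum.elim b1 b2 := by
  funext q; rcases q with i | j <;> rfl

lemma sum_elim_smul' (r : ℝ) (a1 : Fin n1 → ℝ) (a2 : Fin n2 → ℝ) :
    Sum.elim (fun i => r * a1 i) (fun j => r * a2 j) = r • Sum.elim a1 a2 := by
  funext q; rcases q with i | j <;> rfl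

lemma wProd_add_smul (B : Set (Fin n1 × Fin n2)) (v1 u1 : Fin n1 → ℝ) (v2 u2 : Fin n2 → ℝ)
    (r : ℝ) :
    wProd γ ε B (fun i => v1 i + r * u1 i) (fun j => v2 j + r * u2 j)
      = wProd γ ε B v1 v2 + r • wProd γ ε B u1 u2 := by
  have he : Sum.elim (fun i => v1 i + r * u1 i) (fun j => v2 j + r * u2 j)
      = Sum.elim v1 v2 + r • Sum.elim u1 u2 := by
    rw [← sum_elim_smul' r u1 u2, ← sum_elim_add']
  refine Prod.ext (funext fun i => ?_) (funext fun j => ?_) <;>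
    simp only [wProd, he, Matrix.mulVec_add, Matrix.mulVec_smul, Pi.add_apply, Pi.smul_apply,
      Prod.fst_add, Prod.snd_add, Prod.smul_fst, Prod.smul_snd, smul_eq_mul] <;> ring

lemma numap_line (hγ : 0 < γ) {ν α : (Fin n1 → ℝ) × (Fin n2 → ℝ)}
    (hν : DualSys γ ε c ν.1 ν.2 α.1 α.2)
    (v1 : Fin n1 → ℝ) (v2 : Fin n2 → ℝ) (B : Set (Fin n1 × Fin n2)) (t : ℝ)
    (hsig : ∀ i j, max ((α.1 i + t * v1 i) + (α.2 j + t * v2 j) - c i j) 0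
        = chiMat B i j * ((α.1 i + t * v1 i) + (α.2 j + t * v2 j) - c i j))
    (hB0 : ∀ i j, max (α.1 i + α.2 j - c i j) 0
        = chiMat B i j * (α.1 i + α.2 j - c i j)) :
    numap γ ε c (fun i => α.1 i + t * v1 i, fun j => α.2 j + t * v2 j)
      = ν + t • wProd γ ε B v1 v2 := by
  have hγne : γ ≠ 0 := ne_of_gt hγ
  refine Prod.ext (funext fun i => ?_) (funext fun j => ?_)
  · have hMi := Mmat_mulVec_inl (γ := γ) (ε := ε) B (Sum.elim v1 v2) i
    simp only [Sum.elim_inl, Sum.elim_inr] at hMi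
    have hsum : ∑ j, max ((α.1 i + t * v1 i) + (α.2 j + t * v2 j) - c i j) 0
        = (∑ j, chiMat B i j * (α.1 i + α.2 j - c i j))
          + t * (∑ j, chiMat B i j * (v1 i + v2 j)) := by
      rw [Finset.mul_sum, ← Finset.sum_add_distrib]
      refine Finset.sum_congr rfl fun j _ => ?_
      rw [hsig i j]
      ring
    have hsum0 : ∑ j, chiMat B i j * (α.1 i + α.2 j - c i j)
        = ∑ j, max (α.1 i + α.2 j - c i j) 0 :=
      (Finset.sum_congr rfl fun j _ => (hB0 i j).symm)
    have hFν := hν.1 i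
    show ((∑ j, max ((α.1 i + t * v1 i) + (α.2 j + t * v2 j) - c i j) 0)
        + γ * ε * (α.1 i + t * v1 i)) / γ
        = ν.1 i + t * ((1/γ) * (Mmat γ ε B).mulVec (Sum.elim v1 v2) (Sum.inl i))
    rw [hMi, hsum, hsum0]
    field_simp
    first
    | linear_combination hFν
    | linear_combination (γ : ℝ) * hFν
    | linear_combination (γ : ℝ) ^ 2 * hFν
  · have hMj := Mmat_mulVec_inr (γ := γ) (ε := ε) B (Sum.elim v1 v2) j
    simp only [Sum.elim_inl, Sum.elim_inr] at hMj
    have hsum : ∑ i, max ((α.1 i + t * v1 i) + (α.2 j + t * v2 j) - c i j) 0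
        = (∑ i, chiMat B i j * (α.1 i + α.2 j - c i j))
          + t * (∑ i, chiMat B i j * (v1 i + v2 j)) := by
      rw [Finset.mul_sum, ← Finset.sum_add_distrib]
      refine Finset.sum_congr rfl fun i _ => ?_
      rw [hsig i j]
      ring
    have hsum0 : ∑ i, chiMat B i j * (α.1 i + α.2 j - c i j)
        = ∑ i, max (α.1 i + α.2 j - c i j) 0 :=
      (Finset.sum_congr rfl fun i _ => (hB0 i j).symm)
    have hFν := hν.2 j
    show ((∑ i, max ((α.1 i + t * v1 i) + (α.2 j + t * v2 j) - c i j) 0)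
        + γ * ε * (α.2 j + t * v2 j)) / γ
        = ν.2 j + t * ((1/γ) * (Mmat γ ε B).mulVec (Sum.elim v1 v2) (Sum.inr j))
    rw [hMj, hsum, hsum0]
    field_simp
    first
    | linear_combination hFν
    | linear_combination (γ : ℝ) * hFν
    | linear_combination (γ : ℝ) ^ 2 * hFν

lemma F_sq_bound (hγ : 0 < γ) (hε : 0 < ε)
    (hF : ∀ μ : (Fin n1 → ℝ) × (Fin n2 → ℝ), DualSys γ ε c μ.1 μ.2 (F μ).1 (F μ).2)
    (μ ν : (Fin n1 → ℝ) × (Fin n2 → ℝ)) :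
    (∑ i, ((F μ).1 i - (F ν).1 i) ^ 2) + (∑ j, ((F μ).2 j - (F ν).2 j) ^ 2)
      ≤ ((∑ i, (μ.1 i - ν.1 i) ^ 2) + (∑ j, (μ.2 j - ν.2 j) ^ 2)) / ε ^ 2 := by
  classical
  set α := F μ with hα
  set β := F ν with hβ
  set Δ : Fin n1 → Fin n2 → ℝ :=
    fun i j => max (α.1 i + α.2 j - c i j) 0 - max (β.1 i + β.2 j - c i j) 0 with hΔ
  have E1 : ∀ i, ∑ j, Δ i j = γ * (μ.1 i - ν.1 i) - γ * ε * (α.1 i - β.1 i) := by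
    intro i
    have h1 := (hF μ).1 i
    have h2 := (hF ν).1 i
    simp only [hΔ]
    rw [Finset.sum_sub_distrib]
    rw [← hα] at h1
    rw [← hβ] at h2
    linarith
  have E2 : ∀ j, ∑ i, Δ i j = γ * (μ.2 j - ν.2 j) - γ * ε * (α.2 j - β.2 j) := by
    intro j
    have h1 := (hF μ).2 j
    have h2 := (hF ν).2 j
    simp only [hΔ]
    rw [Finset.sum_sub_distrib]
    rw [← hα] at h1
    rw [← hβ] at h2
    linarith
  have key : 0 ≤ ∑ i, ∑ j, Δ i j * ((α.1 i - β.1 i) + (α.2 j - β.2 j)) := by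
    refine Finset.sum_nonneg fun i _ => Finset.sum_nonneg fun j _ => ?_
    have h0 := max_sub_max_mul_nonneg (α.1 i + α.2 j - c i j) (β.1 i + β.2 j - c i j)
    have heq : (α.1 i + α.2 j - c i j) - (β.1 i + β.2 j - c i j)
        = (α.1 i - β.1 i) + (α.2 j - β.2 j) := by ring
    rw [heq] at h0
    exact h0
  have L1 : ∑ i, (γ * (μ.1 i - ν.1 i) - γ * ε * (α.1 i - β.1 i)) * (α.1 i - β.1 i)
      = γ * (∑ i, (μ.1 i - ν.1 i) * (α.1 i - β.1 i))
        - γ * ε * (∑ i, (α.1 i - β.1 i) ^ 2) := by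
    rw [Finset.mul_sum, Finset.mul_sum, ← Finset.sum_sub_distrib]
    exact Finset.sum_congr rfl fun i _ => by ring
  have L2 : ∑ j, (γ * (μ.2 j - ν.2 j) - γ * ε * (α.2 j - β.2 j)) * (α.2 j - β.2 j)
      = γ * (∑ j, (μ.2 j - ν.2 j) * (α.2 j - β.2 j))
        - γ * ε * (∑ j, (α.2 j - β.2 j) ^ 2) := by
    rw [Finset.mul_sum, Finset.mul_sum, ← Finset.sum_sub_distrib]
    exact Finset.sum_congr rfl fun j _ => by ring
  have expand : ∑ i, ∑ j, Δ i j * ((α.1 i - β.1 i) + (α.2 j - β.2 j))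
      = (γ * (∑ i, (μ.1 i - ν.1 i) * (α.1 i - β.1 i))
          - γ * ε * ∑ i, (α.1 i - β.1 i) ^ 2)
        + (γ * (∑ j, (μ.2 j - ν.2 j) * (α.2 j - β.2 j))
          - γ * ε * ∑ j, (α.2 j - β.2 j) ^ 2) := by
    have hsplit : ∀ i : Fin n1, ∀ j : Fin n2, Δ i j * ((α.1 i - β.1 i) + (α.2 j - β.2 j))
        = Δ i j * (α.1 i - β.1 i) + Δ i j * (α.2 j - β.2 j) := fun i j => by ring
    simp_rw [hsplit, Finset.sum_add_distrib]
    have hswap : ∑ i, ∑ j, Δ i j * (α.2 j - β.2 j) = ∑ j, ∑ i, Δ i j * (α.2 j - β.2 j) :=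
      Finset.sum_comm
    rw [hswap]
    simp_rw [← Finset.sum_mul, E1, E2]
    rw [L1, L2]
  rw [expand] at key
  set Q : ℝ := (∑ i, (α.1 i - β.1 i) ^ 2) + (∑ j, (α.2 j - β.2 j) ^ 2) with hQ
  set P : ℝ := (∑ i, (μ.1 i - ν.1 i) ^ 2) + (∑ j, (μ.2 j - ν.2 j) ^ 2) with hP
  set R : ℝ := (∑ i, (μ.1 i - ν.1 i) * (α.1 i - β.1 i))
      + (∑ j, (μ.2 j - ν.2 j) * (α.2 j - β.2 j)) with hR
  have hQnn : 0 ≤ Q := by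
    rw [hQ]
    have := Finset.sum_nonneg (fun i (_ : i ∈ Finset.univ) => sq_nonneg (α.1 i - β.1 i))
    have := Finset.sum_nonneg (fun j (_ : j ∈ Finset.univ) => sq_nonneg (α.2 j - β.2 j))
    linarith
  have hPnn : 0 ≤ P := by
    rw [hP]
    have := Finset.sum_nonneg (fun i (_ : i ∈ Finset.univ) => sq_nonneg (μ.1 i - ν.1 i))
    have := Finset.sum_nonneg (fun j (_ : j ∈ Finset.univ) => sq_nonneg (μ.2 j - ν.2 j))
    linarith
  have h2 : ε * Q ≤ R := by
    have hkey : γ * (ε * Q) ≤ γ * R := by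
      simp only [hQ, hR]
      linarith [key]
    exact le_of_mul_le_mul_left hkey hγ
  -- Cauchy-Schwarz
  have hCS : R ^ 2 ≤ P * Q := by
    have := Finset.sum_mul_sq_le_sq_mul_sq Finset.univ
      (Sum.elim (fun i => μ.1 i - ν.1 i) (fun j => μ.2 j - ν.2 j))
      (Sum.elim (fun i => α.1 i - β.1 i) (fun j => α.2 j - β.2 j))
    simpa only [Fintype.sum_sum_type, Sum.elim_inl, Sum.elim_inr, ← hQ, ← hP, ← hR] using this
  rcases eq_or_lt_of_le hQnn with hQ0 | hQpos
  · rw [← hQ0]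
    positivity
  · rw [le_div_iff₀ (by positivity : (0:ℝ) < ε ^ 2)]
    have hsq : (ε * Q) ^ 2 ≤ R ^ 2 := by
      have hεQ : 0 ≤ ε * Q := mul_nonneg hε.le hQnn
      nlinarith
    have hfin : (ε * Q) ^ 2 ≤ P * Q := le_trans hsq hCS
    have : (Q * ε ^ 2) * Q ≤ P * Q := by nlinarith
    exact le_of_mul_le_mul_right this hQpos

lemma tendsto_F (hγ : 0 < γ) (hε : 0 < ε)
    (hF : ∀ μ : (Fin n1 → ℝ) × (Fin n2 → ℝ), DualSys γ ε c μ.1 μ.2 (F μ).1 (F μ).2)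
    {μs : ℕ → (Fin n1 → ℝ) × (Fin n2 → ℝ)} {μ : (Fin n1 → ℝ) × (Fin n2 → ℝ)}
    (h : Tendsto μs atTop (𝓝 μ)) :
    Tendsto (fun k => F (μs k)) atTop (𝓝 (F μ)) := by
  set P : ℕ → ℝ := fun k => (∑ i, ((μs k).1 i - μ.1 i) ^ 2) + (∑ j, ((μs k).2 j - μ.2 j) ^ 2)
    with hPdef
  set Q : ℕ → ℝ := fun k =>
    (∑ i, ((F (μs k)).1 i - (F μ).1 i) ^ 2) + (∑ j, ((F (μs k)).2 j - (F μ).2 j) ^ 2)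
    with hQdef
  have h1 : ∀ i, Tendsto (fun k => (μs k).1 i) atTop (𝓝 (μ.1 i)) := fun i =>
    (((continuous_apply i).comp continuous_fst).continuousAt (x := μ)).tendsto.comp h
  have h2 : ∀ j, Tendsto (fun k => (μs k).2 j) atTop (𝓝 (μ.2 j)) := fun j =>
    (((continuous_apply j).comp continuous_snd).continuousAt (x := μ)).tendsto.comp h
  have hP : Tendsto P atTop (𝓝 0) := by
    have hs1 : Tendsto (fun k => ∑ i, ((μs k).1 i - μ.1 i) ^ 2) atTop (𝓝 0) := by
      have := tendsto_finset_sum (Finset.univ : Finset (Fin n1))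
        (fun i _ => (((h1 i).sub_const (μ.1 i)).pow 2))
      simpa using this
    have hs2 : Tendsto (fun k => ∑ j, ((μs k).2 j - μ.2 j) ^ 2) atTop (𝓝 0) := by
      have := tendsto_finset_sum (Finset.univ : Finset (Fin n2))
        (fun j _ => (((h2 j).sub_const (μ.2 j)).pow 2))
      simpa using this
    simpa using hs1.add hs2
  have hQnn : ∀ k, 0 ≤ Q k := by
    intro k
    have a1 := Finset.sum_nonneg (fun i (_ : i ∈ Finset.univ) =>
      sq_nonneg ((F (μs k)).1 i - (F μ).1 i))
    have a2 := Finset.sum_nonneg (fun j (_ : j ∈ Finset.univ) =>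
      sq_nonneg ((F (μs k)).2 j - (F μ).2 j))
    simp only [hQdef]
    linarith
  have hQle : ∀ k, Q k ≤ P k / ε ^ 2 := fun k => F_sq_bound hγ hε hF (μs k) μ
  have hQtend : Tendsto Q atTop (𝓝 0) := by
    have hPd : Tendsto (fun k => P k / ε ^ 2) atTop (𝓝 0) := by
      simpa using hP.div_const (ε ^ 2)
    exact squeeze_zero hQnn hQle hPd
  have hcoord1 : ∀ i, Tendsto (fun k => (F (μs k)).1 i) atTop (𝓝 ((F μ).1 i)) := by
    intro i
    have hsq : Tendsto (fun k => ((F (μs k)).1 i - (F μ).1 i) ^ 2) atTop (𝓝 0) := by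
      refine squeeze_zero (fun k => sq_nonneg _) (fun k => ?_) hQtend
      have a1 : ((F (μs k)).1 i - (F μ).1 i) ^ 2
          ≤ ∑ i', ((F (μs k)).1 i' - (F μ).1 i') ^ 2 :=
        Finset.single_le_sum (f := fun i' => ((F (μs k)).1 i' - (F μ).1 i') ^ 2)
          (fun i' _ => sq_nonneg _) (Finset.mem_univ i)
      have a2 := Finset.sum_nonneg (fun j (_ : j ∈ Finset.univ) =>
        sq_nonneg ((F (μs k)).2 j - (F μ).2 j))
      simp only [hQdef]
      linarith
    have habs : Tendsto (fun k => |(F (μs k)).1 i - (F μ).1 i|) atTop (𝓝 0) := by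
      have := hsq.sqrt
      simp only [Real.sqrt_sq_eq_abs, Real.sqrt_zero] at this
      exact this
    have hz : Tendsto (fun k => (F (μs k)).1 i - (F μ).1 i) atTop (𝓝 0) := by
      exact tendsto_of_tendsto_of_tendsto_of_le_of_le
        (by simpa using habs.neg) habs (fun k => neg_abs_le _) (fun k => le_abs_self _)
    have := hz.add (tendsto_const_nhds (x := (F μ).1 i) (f := atTop))
    simpa using this
  have hcoord2 : ∀ j, Tendsto (fun k => (F (μs k)).2 j) atTop (𝓝 ((F μ).2 j)) := by
    intro j
    have hsq : Tendsto (fun k => ((F (μs k)).2 j - (F μ).2 j) ^ 2) atTop (𝓝 0) := by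
      refine squeeze_zero (fun k => sq_nonneg _) (fun k => ?_) hQtend
      have a1 : ((F (μs k)).2 j - (F μ).2 j) ^ 2
          ≤ ∑ j', ((F (μs k)).2 j' - (F μ).2 j') ^ 2 :=
        Finset.single_le_sum (f := fun j' => ((F (μs k)).2 j' - (F μ).2 j') ^ 2)
          (fun j' _ => sq_nonneg _) (Finset.mem_univ j)
      have a2 := Finset.sum_nonneg (fun i (_ : i ∈ Finset.univ) =>
        sq_nonneg ((F (μs k)).1 i - (F μ).1 i))
      simp only [hQdef]
      linarith
    have habs : Tendsto (fun k => |(F (μs k)).2 j - (F μ).2 j|) atTop (𝓝 0) := by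
      have := hsq.sqrt
      simp only [Real.sqrt_sq_eq_abs, Real.sqrt_zero] at this
      exact this
    have hz : Tendsto (fun k => (F (μs k)).2 j - (F μ).2 j) atTop (𝓝 0) := by
      exact tendsto_of_tendsto_of_tendsto_of_le_of_le
        (by simpa using habs.neg) habs (fun k => neg_abs_le _) (fun k => le_abs_self _)
    have := hz.add (tendsto_const_nhds (x := (F μ).2 j) (f := atTop))
    simpa using this
  have t1 : Tendsto (fun k => (F (μs k)).1) atTop (𝓝 (F μ).1) := by
    rw [tendsto_pi_nhds]; exact hcoord1
  have t2 : Tendsto (fun k => (F (μs k)).2) atTop (𝓝 (F μ).2) := by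
    rw [tendsto_pi_nhds]; exact hcoord2
  exact t1.prodMk_nhds t2

end forwardtools

section nondiff

variable {F : (Fin n1 → ℝ) × (Fin n2 → ℝ) → (Fin n1 → ℝ) × (Fin n2 → ℝ)}

lemma not_differentiable (hn1 : 0 < n1) (hn2 : 0 < n2) (hγ : 0 < γ) (hε : 0 < ε)
    (hF : ∀ μ : (Fin n1 → ℝ) × (Fin n2 → ℝ), DualSys γ ε c μ.1 μ.2 (F μ).1 (F μ).2)
    (ν : (Fin n1 → ℝ) × (Fin n2 → ℝ)) (h00 : (omegaZero c F ν).Nonempty) :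
    ¬ DifferentiableAt ℝ (Smap γ c F) ν := by
  intro hd
  obtain ⟨p0, hp0⟩ := h00
  have hG := hd.hasFDerivAt
  set G := fderiv ℝ (Smap γ c F) ν with hGdef
  set α := F ν with hα
  set s : Fin n1 × Fin n2 → ℝ := fun p => α.1 p.1 + α.2 p.2 - c p.1 p.2 with hs
  have hsp0 : s p0 = 0 := hp0
  set Bp : Set (Fin n1 × Fin n2) := {p | 0 ≤ s p} with hBp
  set Bm : Set (Fin n1 × Fin n2) := {p | 0 < s p} with hBm
  have hν : DualSys γ ε c ν.1 ν.2 α.1 α.2 := hF ν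
  -- the two one-sided directional derivative computations
  have keyP : ∀ (v1 : Fin n1 → ℝ) (v2 : Fin n2 → ℝ),
      (∀ p : Fin n1 × Fin n2, s p = 0 → 0 < v1 p.1 + v2 p.2) →
      G (wProd γ ε Bp v1 v2) p0.1 p0.2 = (1/γ) * (v1 p0.1 + v2 p0.2) := by
    intro v1 v2 hv
    set w : Fin n1 × Fin n2 → ℝ := fun p => v1 p.1 + v2 p.2 with hw
    obtain ⟨δ, hδpos, hδ⟩ := exists_delta hn1 hn2 s w
    refine deriv_along hG p0.1 p0.2 _ δ hδpos ?_
    intro t ht htδ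
    have hsig : ∀ i j, max ((α.1 i + t * v1 i) + (α.2 j + t * v2 j) - c i j) 0
        = chiMat Bp i j * ((α.1 i + t * v1 i) + (α.2 j + t * v2 j) - c i j) := by
      intro i j
      have hval : (α.1 i + t * v1 i) + (α.2 j + t * v2 j) - c i j
          = s (i, j) + t * w (i, j) := by
        simp only [hs, hw]; ring
      rcases lt_trichotomy (s (i, j)) 0 with hlt | heq | hgt
      · have hneg : s (i, j) + t * w (i, j) < 0 := by
          rcases eq_or_lt_of_le ht with ht0 | ht0
          · rw [← ht0]; simpa using hlt
          · exact (hδ t ht0 htδ (i, j)).2 hlt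
        rw [hval, max_eq_right hneg.le,
          chiMat_not_mem (show (i, j) ∉ Bp by
            simp only [hBp, Set.mem_setOf_eq]; exact not_le.2 hlt), zero_mul]
      · have hwp : 0 < w (i, j) := hv (i, j) heq
        have hnn : 0 ≤ s (i, j) + t * w (i, j) := by
          rw [heq, zero_add]; exact mul_nonneg ht hwp.le
        rw [hval, max_eq_left hnn,
          chiMat_mem (show (i, j) ∈ Bp from le_of_eq heq.symm), one_mul]
      · have hpos : 0 < s (i, j) + t * w (i, j) := by
          rcases eq_or_lt_of_le ht with ht0 | ht0
          · rw [← ht0]; simpa using hgt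
          · exact (hδ t ht0 htδ (i, j)).1 hgt
        rw [hval, max_eq_left hpos.le,
          chiMat_mem (show (i, j) ∈ Bp from le_of_lt hgt), one_mul]
    have hB0 : ∀ i j, max (α.1 i + α.2 j - c i j) 0
        = chiMat Bp i j * (α.1 i + α.2 j - c i j) := by
      intro i j
      have hval : α.1 i + α.2 j - c i j = s (i, j) := rfl
      rcases lt_trichotomy (s (i, j)) 0 with hlt | heq | hgt
      · rw [hval, max_eq_right hlt.le,
          chiMat_not_mem (show (i, j) ∉ Bp by
            simp only [hBp, Set.mem_setOf_eq]; exact not_le.2 hlt), zero_mul]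
      · rw [hval, max_eq_left heq.ge, chiMat_mem (show (i, j) ∈ Bp from le_of_eq heq.symm),
          one_mul]
      · rw [hval, max_eq_left hgt.le,
          chiMat_mem (show (i, j) ∈ Bp from le_of_lt hgt), one_mul]
    have hline := numap_line hγ hν v1 v2 Bp t hsig hB0
    have hFnum := F_numap hγ hε hF (fun i => α.1 i + t * v1 i, fun j => α.2 j + t * v2 j)
    rw [← hline]
    simp only [Smap, hFnum]
    have e1 : (fun i => α.1 i + t * v1 i) p0.1 + (fun j => α.2 j + t * v2 j) p0.2
        - c p0.1 p0.2 = t * (v1 p0.1 + v2 p0.2) := by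
      have h' : s p0 + t * (v1 p0.1 + v2 p0.2) = t * (v1 p0.1 + v2 p0.2) := by
        rw [hsp0, zero_add]
      rw [← h']
      simp only [hs]; ring
    have e2 : α.1 p0.1 + α.2 p0.2 - c p0.1 p0.2 = 0 := hsp0
    rw [e1, e2, max_eq_left (mul_nonneg ht (hv p0 hsp0).le), max_self]
    ring
  have keyM : ∀ (v1 : Fin n1 → ℝ) (v2 : Fin n2 → ℝ),
      (∀ p : Fin n1 × Fin n2, s p = 0 → v1 p.1 + v2 p.2 < 0) →
      G (wProd γ ε Bm v1 v2) p0.1 p0.2 = 0 := by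
    intro v1 v2 hv
    set w : Fin n1 × Fin n2 → ℝ := fun p => v1 p.1 + v2 p.2 with hw
    obtain ⟨δ, hδpos, hδ⟩ := exists_delta hn1 hn2 s w
    refine deriv_along hG p0.1 p0.2 _ δ hδpos ?_
    intro t ht htδ
    have hsig : ∀ i j, max ((α.1 i + t * v1 i) + (α.2 j + t * v2 j) - c i j) 0
        = chiMat Bm i j * ((α.1 i + t * v1 i) + (α.2 j + t * v2 j) - c i j) := by
      intro i j
      have hval : (α.1 i + t * v1 i) + (α.2 j + t * v2 j) - c i j
          = s (i, j) + t * w (i, j) := by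
        simp only [hs, hw]; ring
      rcases lt_trichotomy (s (i, j)) 0 with hlt | heq | hgt
      · have hneg : s (i, j) + t * w (i, j) < 0 := by
          rcases eq_or_lt_of_le ht with ht0 | ht0
          · rw [← ht0]; simpa using hlt
          · exact (hδ t ht0 htδ (i, j)).2 hlt
        rw [hval, max_eq_right hneg.le,
          chiMat_not_mem (show (i, j) ∉ Bm by
            simp only [hBm, Set.mem_setOf_eq]; exact not_lt.2 hlt.le), zero_mul]
      · have hwp : w (i, j) < 0 := hv (i, j) heq
        have hnp : s (i, j) + t * w (i, j) ≤ 0 := by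
          rw [heq, zero_add]
          exact mul_nonpos_of_nonneg_of_nonpos ht hwp.le
        rw [hval, max_eq_right hnp,
          chiMat_not_mem (show (i, j) ∉ Bm by
            simp only [hBm, Set.mem_setOf_eq]; exact not_lt.2 heq.le), zero_mul]
      · have hpos : 0 < s (i, j) + t * w (i, j) := by
          rcases eq_or_lt_of_le ht with ht0 | ht0
          · rw [← ht0]; simpa using hgt
          · exact (hδ t ht0 htδ (i, j)).1 hgt
        rw [hval, max_eq_left hpos.le, chiMat_mem (show (i, j) ∈ Bm from hgt), one_mul]
    have hB0 : ∀ i j, max (α.1 i + α.2 j - c i j) 0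
        = chiMat Bm i j * (α.1 i + α.2 j - c i j) := by
      intro i j
      have hval : α.1 i + α.2 j - c i j = s (i, j) := rfl
      rcases lt_trichotomy (s (i, j)) 0 with hlt | heq | hgt
      · rw [hval, max_eq_right hlt.le,
          chiMat_not_mem (show (i, j) ∉ Bm by
            simp only [hBm, Set.mem_setOf_eq]; exact not_lt.2 hlt.le), zero_mul]
      · rw [hval, max_eq_right heq.le,
          chiMat_not_mem (show (i, j) ∉ Bm by
            simp only [hBm, Set.mem_setOf_eq]; exact not_lt.2 heq.le), zero_mul]
      · rw [hval, max_eq_left hgt.le, chiMat_mem (show (i, j) ∈ Bm from hgt), one_mul]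
    have hline := numap_line hγ hν v1 v2 Bm t hsig hB0
    have hFnum := F_numap hγ hε hF (fun i => α.1 i + t * v1 i, fun j => α.2 j + t * v2 j)
    rw [← hline]
    simp only [Smap, hFnum]
    have e1 : (fun i => α.1 i + t * v1 i) p0.1 + (fun j => α.2 j + t * v2 j) p0.2
        - c p0.1 p0.2 = t * (v1 p0.1 + v2 p0.2) := by
      have h' : s p0 + t * (v1 p0.1 + v2 p0.2) = t * (v1 p0.1 + v2 p0.2) := by
        rw [hsp0, zero_add]
      rw [← h']
      simp only [hs]; ring
    have e2 : α.1 p0.1 + α.2 p0.2 - c p0.1 p0.2 = 0 := hsp0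
    have hnp0 : t * (v1 p0.1 + v2 p0.2) ≤ 0 :=
      mul_nonpos_of_nonneg_of_nonpos ht (hv p0 hsp0).le
    rw [e1, e2, max_eq_right hnp0, max_self]
    ring
  -- linear extension to all directions
  have hGlin : ∀ (x y : (Fin n1 → ℝ) × (Fin n2 → ℝ)) (r : ℝ),
      G (x + r • y) p0.1 p0.2 = G x p0.1 p0.2 + r * G y p0.1 p0.2 := by
    intro x y r
    rw [map_add, map_smul]
    rfl
  have hrbound : ∀ (u1 : Fin n1 → ℝ) (u2 : Fin n2 → ℝ), ∃ r : ℝ, 0 < r ∧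
      ∀ p : Fin n1 × Fin n2, r * |u1 p.1 + u2 p.2| < 2 := by
    intro u1 u2
    have hne : Nonempty (Fin n1 × Fin n2) := ⟨(⟨0, hn1⟩, ⟨0, hn2⟩)⟩
    have hun : (Finset.univ : Finset (Fin n1 × Fin n2)).Nonempty := Finset.univ_nonempty
    set K : ℝ := Finset.univ.sup' hun (fun p => |u1 p.1 + u2 p.2|) with hK
    have hK0 : 0 ≤ K := by
      have h1 : |u1 (Classical.arbitrary (Fin n1 × Fin n2)).1
          + u2 (Classical.arbitrary (Fin n1 × Fin n2)).2| ≤ K :=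
        Finset.le_sup' (fun p => |u1 p.1 + u2 p.2|)
          (Finset.mem_univ (Classical.arbitrary (Fin n1 × Fin n2)))
      exact le_trans (abs_nonneg _) h1
    refine ⟨1 / (K + 1), by positivity, fun p => ?_⟩
    have h1 : |u1 p.1 + u2 p.2| ≤ K := Finset.le_sup' (fun p => |u1 p.1 + u2 p.2|)
      (Finset.mem_univ p)
    rw [div_mul_eq_mul_div, one_mul, div_lt_iff₀ (by linarith)]
    nlinarith
  have keyPall : ∀ (u1 : Fin n1 → ℝ) (u2 : Fin n2 → ℝ),
      G (wProd γ ε Bp u1 u2) p0.1 p0.2 = (1/γ) * (u1 p0.1 + u2 p0.2) := by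
    intro u1 u2
    obtain ⟨r, hr, hrb⟩ := hrbound u1 u2
    have base := keyP (fun _ => 1) (fun _ => 1) (fun p _ => by norm_num)
    have pert := keyP (fun i => 1 + r * u1 i) (fun j => 1 + r * u2 j) ?_
    · have hw : wProd γ ε Bp (fun i => 1 + r * u1 i) (fun j => 1 + r * u2 j)
          = wProd γ ε Bp (fun _ => 1) (fun _ => 1) + r • wProd γ ε Bp u1 u2 :=
        wProd_add_smul Bp _ u1 _ u2 r
      rw [hw, hGlin, base] at pert
      have hres : r * G (wProd γ ε Bp u1 u2) p0.1 p0.2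
          = r * ((1/γ) * (u1 p0.1 + u2 p0.2)) := by
        have hγne : γ ≠ 0 := ne_of_gt hγ
        linear_combination pert
      exact mul_left_cancel₀ (ne_of_gt hr) hres
    · intro p _
      have h1 : r * |u1 p.1 + u2 p.2| < 2 := hrb p
      have h2 : |r * (u1 p.1 + u2 p.2)| = r * |u1 p.1 + u2 p.2| := by
        rw [abs_mul, abs_of_pos hr]
      have h3 := neg_abs_le (r * (u1 p.1 + u2 p.2))
      have h4 : r * (u1 p.1 + u2 p.2) = r * u1 p.1 + r * u2 p.2 := by ring
      show 0 < (1 + r * u1 p.1) + (1 + r * u2 p.2)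
      linarith
  have keyMall : ∀ (u1 : Fin n1 → ℝ) (u2 : Fin n2 → ℝ),
      G (wProd γ ε Bm u1 u2) p0.1 p0.2 = 0 := by
    intro u1 u2
    obtain ⟨r, hr, hrb⟩ := hrbound u1 u2
    have base := keyM (fun _ => -1) (fun _ => -1) (fun p _ => by norm_num)
    have pert := keyM (fun i => -1 + r * u1 i) (fun j => -1 + r * u2 j) ?_
    · have hw : wProd γ ε Bm (fun i => -1 + r * u1 i) (fun j => -1 + r * u2 j)
          = wProd γ ε Bm (fun _ => -1) (fun _ => -1) + r • wProd γ ε Bm u1 u2 :=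
        wProd_add_smul Bm _ u1 _ u2 r
      rw [hw, hGlin, base] at pert
      have hres : r * G (wProd γ ε Bm u1 u2) p0.1 p0.2 = r * 0 := by
        rw [mul_zero]
        linarith
      exact mul_left_cancel₀ (ne_of_gt hr) hres
    · intro p _
      have h1 : r * |u1 p.1 + u2 p.2| < 2 := hrb p
      have h2 : |r * (u1 p.1 + u2 p.2)| = r * |u1 p.1 + u2 p.2| := by
        rw [abs_mul, abs_of_pos hr]
      have h3 := le_abs_self (r * (u1 p.1 + u2 p.2))
      have h4 : r * (u1 p.1 + u2 p.2) = r * u1 p.1 + r * u2 p.2 := by ring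
      show (-1 + r * u1 p.1) + (-1 + r * u2 p.2) < 0
      linarith
  -- contradiction
  set y := wProd γ ε Bp (fun _ => (1:ℝ)) (fun _ => (1:ℝ)) with hy
  have h2γ : G y p0.1 p0.2 = (1/γ) * 2 := by
    have := keyPall (fun _ => (1:ℝ)) (fun _ => (1:ℝ))
    rw [← hy] at this
    rw [this]; norm_num
  set x : Fin n1 ⊕ Fin n2 → ℝ := γ • ((Mmat γ ε Bm)⁻¹.mulVec (Sum.elim y.1 y.2)) with hx
  have hwx : wProd γ ε Bm (fun i => x (Sum.inl i)) (fun j => x (Sum.inr j)) = y := by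
    have helim : Sum.elim (fun i => x (Sum.inl i)) (fun j => x (Sum.inr j)) = x :=
      funext fun q => by rcases q with i | j <;> rfl
    have hMx : (Mmat γ ε Bm).mulVec x = γ • Sum.elim y.1 y.2 := by
      rw [hx, Matrix.mulVec_smul, Mmat_mulVec_inv hγ hε]
    refine Prod.ext (funext fun i => ?_) (funext fun j => ?_) <;>
      simp only [wProd, helim, hMx, Pi.smul_apply, smul_eq_mul, Sum.elim_inl, Sum.elim_inr] <;>
      field_simp
  have h0' : G y p0.1 p0.2 = 0 := by
    rw [← hwx]
    exact keyMall _ _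
  rw [h2γ] at h0'
  have hpos : (0:ℝ) < (1/γ) * 2 := by positivity
  linarith

end nondiff

end BPf

open BPf

/-- Characterization of the Bouligand subdifferential of S_{γ,ε} at points of
non-differentiability. -/
theorem Smap_bouligand_subdifferential (n1 n2 : ℕ) (hn1 : 0 < n1) (hn2 : 0 < n2)
    (γ ε : ℝ) (hγ : 0 < γ) (hε : 0 < ε) (c : Fin n1 → Fin n2 → ℝ)
    (F : (Fin n1 → ℝ) × (Fin n2 → ℝ) → (Fin n1 → ℝ) × (Fin n2 → ℝ))
    (hF : ∀ μ : (Fin n1 → ℝ) × (Fin n2 → ℝ), DualSys γ ε c μ.1 μ.2 (F μ).1 (F μ).2)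
    (μ : (Fin n1 → ℝ) × (Fin n2 → ℝ))
    (hΩ0 : (omegaZero c F μ).Nonempty)
    (G : ((Fin n1 → ℝ) × (Fin n2 → ℝ)) →L[ℝ] (Fin n1 → Fin n2 → ℝ)) :
    (∃ μs : ℕ → (Fin n1 → ℝ) × (Fin n2 → ℝ),
      Tendsto μs atTop (𝓝 μ) ∧
      (∀ k, DifferentiableAt ℝ (Smap γ c F) (μs k)) ∧
      Tendsto (fun k => fderiv ℝ (Smap γ c F) (μs k)) atTop (𝓝 G)) ↔
    (∃ A : Set (Fin n1 × Fin n2), A ⊆ omegaZero c F μ ∧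
      HasOuterStructure A (omegaZero c F μ) ∧
      ∀ h : (Fin n1 → ℝ) × (Fin n2 → ℝ), ∀ i j,
        G h i j =
          chiMat (omegaPlus c F μ ∪ A) i j *
            (((sysMat (omegaPlus c F μ ∪ A) +
                (γ * ε) • (1 : Matrix (Fin n1 ⊕ Fin n2) (Fin n1 ⊕ Fin n2) ℝ))⁻¹).mulVec
                (Sum.elim h.1 h.2) (Sum.inl i) +
              ((sysMat (omegaPlus c F μ ∪ A) +
                (γ * ε) • (1 : Matrix (Fin n1 ⊕ Fin n2) (Fin n1 ⊕ Fin n2) ℝ))⁻¹).mulVec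
                (Sum.elim h.1 h.2) (Sum.inr j))) := by
  classical
  constructor
  · rintro ⟨μs, hconv, hdiff, hder⟩
    have h0k : ∀ k, omegaZero c F (μs k) = ∅ := by
      intro k
      rcases Set.eq_empty_or_nonempty (omegaZero c F (μs k)) with h | h
      · exact h
      · exact absurd (hdiff k) (not_differentiable hn1 hn2 hγ hε hF (μs k) h)
    have hfd : ∀ k, fderiv ℝ (Smap γ c F) (μs k) = Dclm γ ε (omegaPlus c F (μs k)) :=
      fun k => (hasFDerivAt_Smap hn1 hn2 hγ hε hF (μs k) (h0k k)).fderiv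
    obtain ⟨Astar, hAstar⟩ :=
      Finite.exists_infinite_fiber (fun k => omegaPlus c F (μs k))
    have hfreq : ∃ᶠ k in atTop, omegaPlus c F (μs k) = Astar := by
      rw [Nat.frequently_atTop_iff_infinite]
      exact Set.infinite_coe_iff.mp hAstar
    have hGD : G = Dclm γ ε Astar := by
      have hmem : ∃ᶠ k in atTop,
          fderiv ℝ (Smap γ c F) (μs k) ∈ ({Dclm γ ε Astar} :
            Set (((Fin n1 → ℝ) × (Fin n2 → ℝ)) →L[ℝ] (Fin n1 → Fin n2 → ℝ))) :=
        hfreq.mono fun k hk => by rw [hfd k, hk]; exact rfl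
      have hcl := mem_closure_of_frequently_of_tendsto hmem hder
      rwa [closure_singleton, Set.mem_singleton_iff] at hcl
    have hFt := tendsto_F hγ hε hF hconv
    set s : Fin n1 × Fin n2 → ℝ := fun p => (F μ).1 p.1 + (F μ).2 p.2 - c p.1 p.2 with hs
    have hne : Nonempty (Fin n1 × Fin n2) := ⟨(⟨0, hn1⟩, ⟨0, hn2⟩)⟩
    have hun : (Finset.univ : Finset (Fin n1 × Fin n2)).Nonempty := Finset.univ_nonempty
    set δ : ℝ := Finset.univ.inf' hun (fun p => if s p = 0 then 1 else |s p|) with hδdef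
    have hδpos : 0 < δ := by
      rw [hδdef, Finset.lt_inf'_iff]
      intro p _
      by_cases h : s p = 0
      · rw [if_pos h]; norm_num
      · rw [if_neg h]; exact abs_pos.2 h
    have hδle : ∀ p, s p ≠ 0 → δ ≤ |s p| := by
      intro p hp
      have := Finset.inf'_le (fun p => if s p = 0 then 1 else |s p|) (Finset.mem_univ p)
      rwa [if_neg hp] at this
    have hev : ∀ᶠ k in atTop, ∀ p : Fin n1 × Fin n2,
        |((F (μs k)).1 p.1 + (F (μs k)).2 p.2 - c p.1 p.2) - s p| < δ := by
      rw [Filter.eventually_all]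
      intro p
      have hco : Tendsto (fun k => (F (μs k)).1 p.1 + (F (μs k)).2 p.2 - c p.1 p.2)
          atTop (𝓝 (s p)) := by
        have hcont : Continuous (fun x : (Fin n1 → ℝ) × (Fin n2 → ℝ) =>
            x.1 p.1 + x.2 p.2 - c p.1 p.2) :=
          (((continuous_apply p.1).comp continuous_fst).add
            ((continuous_apply p.2).comp continuous_snd)).sub continuous_const
        exact (hcont.continuousAt (x := F μ)).tendsto.comp hFt
      have := Metric.tendsto_nhds.1 hco δ hδpos
      refine this.mono fun k hk => ?_
      rwa [Real.dist_eq] at hk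
    obtain ⟨k0, hk0A, hk0close⟩ := (hfreq.and_eventually hev).exists
    set sk : Fin n1 × Fin n2 → ℝ :=
      fun p => (F (μs k0)).1 p.1 + (F (μs k0)).2 p.2 - c p.1 p.2 with hsk
    have hskpos : ∀ p : Fin n1 × Fin n2, p ∈ Astar ↔ 0 < sk p := by
      intro p
      rw [← hk0A]
      exact Iff.rfl
    have hsknz : ∀ p : Fin n1 × Fin n2, sk p ≠ 0 := by
      intro p
      exact fun hp => Set.eq_empty_iff_forall_notMem.1 (h0k k0) p hp
    have hclose : ∀ p : Fin n1 × Fin n2, |sk p - s p| < δ := hk0close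
    set A : Set (Fin n1 × Fin n2) := Astar \ omegaPlus c F μ with hA
    have hsz : ∀ p : Fin n1 × Fin n2, p ∈ Astar → s p = 0 ∨ 0 < s p := by
      intro p hp
      rcases lt_trichotomy (s p) 0 with h | h | h
      · exfalso
        have h1 : δ ≤ -s p := le_trans (hδle p (ne_of_lt h)) (le_of_eq (abs_of_neg h))
        have h2 := abs_lt.1 (hclose p)
        have h3 : 0 < sk p := (hskpos p).1 hp
        linarith [h2.2]
      · exact Or.inl h
      · exact Or.inr h
    have hsub : A ⊆ omegaZero c F μ := by
      intro p hp
      obtain ⟨hpA, hpn⟩ := hp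
      rcases hsz p hpA with h | h
      · exact h
      · exact absurd h hpn
    have hOsub : omegaPlus c F μ ⊆ Astar := by
      intro p hp
      have hps : 0 < s p := hp
      have h1 : δ ≤ s p := le_trans (hδle p (ne_of_gt hps)) (le_of_eq (abs_of_pos hps))
      have h2 := abs_lt.1 (hclose p)
      rw [hskpos p]
      linarith [h2.1]
    have huni : omegaPlus c F μ ∪ A = Astar := by
      ext p
      constructor
      · rintro (hp | hp)
        · exact hOsub hp
        · exact hp.1
      · intro hp
        rcases hsz p hp with h | h
        · refine Or.inr ⟨hp, fun h' => ?_⟩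
          have h2 : 0 < s p := h'
          rw [h] at h2
          exact lt_irrefl 0 h2
        · exact Or.inl h
    have houter : HasOuterStructure A (omegaZero c F μ) := by
      refine ⟨fun i => (F (μs k0)).1 i - (F μ).1 i, fun j => (F (μs k0)).2 j - (F μ).2 j,
        ?_, ?_⟩
      · intro p hp
        have h0 : s p = 0 := hsub hp
        have h1 : 0 < sk p := (hskpos p).1 hp.1
        have : sk p - s p = ((F (μs k0)).1 p.1 - (F μ).1 p.1)
            + ((F (μs k0)).2 p.2 - (F μ).2 p.2) := by
          simp only [hsk, hs]; ring
        rw [← this, h0, sub_zero]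
        exact h1
      · intro p hp
        obtain ⟨hp0, hpA⟩ := hp
        have h0 : s p = 0 := hp0
        have hpOm : p ∉ omegaPlus c F μ := by
          intro h'
          have h2 : 0 < s p := h'
          rw [h0] at h2
          exact lt_irrefl 0 h2
        have hpAstar : p ∉ Astar := by
          intro hmem
          exact hpA ⟨hmem, hpOm⟩
        have h1 : sk p < 0 := by
          rcases lt_trichotomy (sk p) 0 with h | h | h
          · exact h
          · exact absurd h (hsknz p)
          · exact absurd ((hskpos p).2 h) hpAstar
        have : sk p - s p = ((F (μs k0)).1 p.1 - (F μ).1 p.1)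
            + ((F (μs k0)).2 p.2 - (F μ).2 p.2) := by
          simp only [hsk, hs]; ring
        rw [← this, h0, sub_zero]
        exact h1
    refine ⟨A, hsub, houter, ?_⟩
    intro h i j
    rw [hGD, huni]
    rfl
  · rintro ⟨A, hsub, hout, hform⟩
    have hGeq : G = Dclm γ ε (omegaPlus c F μ ∪ A) := by
      refine ContinuousLinearMap.ext fun h => funext fun i => funext fun j => ?_
      rw [hform h i j]
      rfl
    obtain ⟨μs, h1, h2, h3⟩ := backward_dir hn1 hn2 hγ hε hF μ A hsub hout
    refine ⟨μs, h1, h2, ?_⟩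
    rw [hGeq]
    exact tendsto_const_nhds.congr fun k => (h3 k).symm
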